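/- Let (V; f, g) be a dual-modular instance with V nonempty. Then there is a unique maximal (with respect to set inclusion) densest subset, i.e. a unique nonempty S₁ ⊆ V maximizing ρ(S) = f(S)/g(S) over nonempty subsets such that every densest subset is contained in S₁. -/

import Mathlib

open Finset

variable {V : Type*} [Fintype V] [DecidableEq V]

/-- A set function is supermodular. -/
def Supermodular (f : Finset V → ℝ) : Prop :=
  ∀ A B : Finset V, f A + f B ≤ f (A ∩ B) + f (A ∪ B)

/-- A set function is submodular. -/
def Submodular (g : Finset V → ℝ) : Prop :=
  ∀ A B : Finset V, g (A ∩ B) + g (A ∪ B) ≤ g A + g B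

/-- A set function is monotone. -/
def MonotoneFn (f : Finset V → ℝ) : Prop :=
  ∀ A B : Finset V, A ⊆ B → f A ≤ f B

/-- A set function is strictly monotone. -/
def StrictMonoFn (g : Finset V → ℝ) : Prop :=
  ∀ A B : Finset V, A ⊂ B → g A < g B

/-- A dual-modular instance `(V; f, g)`: `f` is a nonnegative monotone supermodular
reward function, `g` is a nonnegative strictly monotone submodular cost function,
both vanishing on the empty set. -/
structure DualModular (f g : Finset V → ℝ) : Prop where
  f_nonneg : ∀ A, 0 ≤ f A
  g_nonneg : ∀ A, 0 ≤ g A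
  f_empty : f ∅ = 0
  g_empty : g ∅ = 0
  f_mono : MonotoneFn f
  g_strictMono : StrictMonoFn g
  f_supermodular : Supermodular f
  g_submodular : Submodular g

/-- Density of a subset. -/
noncomputable def density (f g : Finset V → ℝ) (S : Finset V) : ℝ := f S / g S

/-- Marginal contribution `h(S|A) = h(S ∪ A) - h(A)`. -/
def marginal (h : Finset V → ℝ) (S A : Finset V) : ℝ := h (S ∪ A) - h A

/-- Marginal density `ρ(S|A) = f(S|A)/g(S|A)`. -/
noncomputable def margDensity (f g : Finset V → ℝ) (S A : Finset V) : ℝ :=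
  marginal f S A / marginal g S A

/-- `S_{<i}`: the union of earlier parts in an indexed family. -/
def below {k : ℕ} (S : Fin k → Finset V) (i : Fin k) : Finset V :=
  (Finset.univ.filter (fun j => j < i)).biUnion S

/-- The density decomposition `V = S₁ ∪ … ∪ S_k`: each `S i` is a nonempty maximal
densest subset of the remaining instance with marginal functions. -/
structure IsDensityDecomposition (f g : Finset V → ℝ) {k : ℕ} (S : Fin k → Finset V) :
    Prop where
  nonempty : ∀ i, (S i).Nonempty
  disj : ∀ i, Disjoint (S i) (below S i)
  cover : Finset.univ.biUnion S = (Finset.univ : Finset V)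
  maxDensity : ∀ i, ∀ T : Finset V, T.Nonempty → Disjoint T (below S i) →
    margDensity f g T (below S i) ≤ margDensity f g (S i) (below S i)
  maximal : ∀ i, ∀ T : Finset V, T.Nonempty → Disjoint T (below S i) →
    margDensity f g (S i) (below S i) ≤ margDensity f g T (below S i) → T ⊆ S i

/-- `ρ_i`, the density of the `i`-th component of the decomposition. -/
noncomputable def decompDensity (f g : Finset V → ℝ) {k : ℕ} (S : Fin k → Finset V)
    (i : Fin k) : ℝ :=
  margDensity f g (S i) (below S i)

/-- Membership in the base contrapolymatroid `B≥_f`. -/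
def memBf (f : Finset V → ℝ) (x : V → ℝ) : Prop :=
  (∀ v, 0 ≤ x v) ∧ (∑ v, x v = f Finset.univ) ∧ ∀ A : Finset V, f A ≤ ∑ v ∈ A, x v

/-- Membership in the base polymatroid `B≤_g`. -/
def memBg (g : Finset V → ℝ) (y : V → ℝ) : Prop :=
  (∀ v, 0 ≤ y v) ∧ (∑ v, y v = g Finset.univ) ∧ ∀ A : Finset V, ∑ v ∈ A, y v ≤ g A

/-- An allocation is a pair `(x, y) ∈ B≥_f × B≤_g`. -/
def Allocation (f g : Finset V → ℝ) (x y : V → ℝ) : Prop := memBf f x ∧ memBg g y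

/-- The locally maximin condition for an allocation. -/
def LocallyMaximin (f g : Finset V → ℝ) (x y : V → ℝ) : Prop :=
  ∀ ρ : ℝ, 0 < ρ →
    (∑ v ∈ Finset.univ.filter (fun v => ρ ≤ x v / y v), x v
       = f (Finset.univ.filter (fun v => ρ ≤ x v / y v))) ∧
    (∑ v ∈ Finset.univ.filter (fun v => ρ ≤ x v / y v), y v
       = g (Finset.univ.filter (fun v => ρ ≤ x v / y v)))

/-- The multiset of induced densities, sorted in non-increasing order. -/
noncomputable def sortedDensities (x y : V → ℝ) : List ℝ :=
  ((Finset.univ.val.map (fun v => x v / y v)).sort (· ≤ ·)).reverse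

/-- An allocation is lexicographically optimal if its non-increasingly sorted density
vector is lexicographically minimal among all allocations. -/
def LexOptimal (f g : Finset V → ℝ) (x y : V → ℝ) : Prop :=
  Allocation f g x y ∧
  ∀ x' y' : V → ℝ, Allocation f g x' y' → sortedDensities x y ≤ sortedDensities x' y'

/-- The hockey-stick divergence `HS_γ(x ‖ y)`. -/
noncomputable def HS (γ : ℝ) (x y : V → ℝ) : ℝ := ∑ u, max (x u - γ * y u) 0

/-- The `θ`-divergence `D_θ(x ‖ y) = Σ_u y_u · θ(x_u / y_u)`. -/
noncomputable def Dtheta (θ : ℝ → ℝ) (x y : V → ℝ) : ℝ := ∑ u, y u * θ (x u / y u)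

/-- Permutations of `V`, encoded as bijections to positions `Fin |V|`;
`u ≺_σ v` iff `σ u < σ v`. -/
abbrev Perms (V : Type*) [Fintype V] := V ≃ Fin (Fintype.card V)

/-- `h^σ(u)`: the marginal contribution of `u` given the elements preceding it in `σ`. -/
def permVal (h : Finset V → ℝ) (σ : Perms V) (u : V) : ℝ :=
  h (insert u (Finset.univ.filter (fun w => σ w < σ u))) -
    h (Finset.univ.filter (fun w => σ w < σ u))

/-- A probability distribution on permutations of `V`. -/
def IsDist (p : Perms V → ℝ) : Prop := (∀ σ, 0 ≤ p σ) ∧ ∑ σ, p σ = 1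

/-- `h^p(u) = Σ_σ p_σ · h^σ(u)`. -/
noncomputable def distVal (h : Finset V → ℝ) (p : Perms V → ℝ) (u : V) : ℝ :=
  ∑ σ, p σ * permVal h σ u

/-- The density induced by a solution `(p, q)`. -/
noncomputable def solDensity (f g : Finset V → ℝ) (p q : Perms V → ℝ) (v : V) : ℝ :=
  distVal f p v / distVal g q v

/-- A solution `(p, q)` is locally maximin if whenever `u` has strictly larger induced
density than `v`, every permutation with positive weight puts `u` before `v`. -/
def LocallyMaximinSol (f g : Finset V → ℝ) (p q : Perms V → ℝ) : Prop :=
  ∀ u v : V, solDensity f g p q v < solDensity f g p q u →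
    ∀ σ : Perms V, (0 < p σ ∨ 0 < q σ) → σ u < σ v

/-- The convex-program objective `Φ_θ(p, q) = D_θ(f^p ‖ g^q)`. -/
noncomputable def Phi (θ : ℝ → ℝ) (f g : Finset V → ℝ) (p q : Perms V → ℝ) : ℝ :=
  Dtheta θ (distVal f p) (distVal g q)

lemma DualModular.g_pos {f g : Finset V → ℝ} (hdm : DualModular f g) {A : Finset V}
    (hA : A.Nonempty) : 0 < g A := by
  have := hdm.g_strictMono ∅ A (Finset.empty_ssubset.mpr hA)
  simpa [hdm.g_empty] using this

lemma densest_union {f g : Finset V → ℝ} (hdm : DualModular f g) {ρ : ℝ} (hρ : 0 ≤ ρ)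
    (hmax : ∀ T : Finset V, T.Nonempty → density f g T ≤ ρ)
    {A B : Finset V} (hA : A.Nonempty) (hB : B.Nonempty)
    (hfA : density f g A = ρ) (hfB : density f g B = ρ) :
    density f g (A ∪ B) = ρ := by
  have hgA : 0 < g A := hdm.g_pos hA
  have hgB : 0 < g B := hdm.g_pos hB
  have hgU : 0 < g (A ∪ B) := hdm.g_pos (hA.mono Finset.subset_union_left)
  have hfA' : f A = ρ * g A := by
    have := (div_eq_iff hgA.ne').mp hfA; linarith
  have hfB' : f B = ρ * g B := by
    have := (div_eq_iff hgB.ne').mp hfB; linarith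
  have hcap : f (A ∩ B) ≤ ρ * g (A ∩ B) := by
    rcases (A ∩ B).eq_empty_or_nonempty with h | h
    · simp [h, hdm.f_empty, hdm.g_empty]
    · have hg : 0 < g (A ∩ B) := hdm.g_pos h
      have := hmax _ h
      rw [density, div_le_iff₀ hg] at this
      linarith
  have hUne : (A ∪ B).Nonempty := hA.mono (Finset.subset_union_left : A ⊆ A ∪ B)
  have hU : f (A ∪ B) ≤ ρ * g (A ∪ B) := by
    have := hmax _ hUne
    rw [density, div_le_iff₀ hgU] at this
    linarith
  have h1 := hdm.f_supermodular A B
  have h2 := hdm.g_submodular A B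
  have hU' : ρ * g (A ∪ B) ≤ f (A ∪ B) := by nlinarith
  rw [density, div_eq_iff hgU.ne']
  linarith

/-- there is a unique maximal densest subset, containing
every densest subset. -/
theorem unique_maximal_densest (f g : Finset V → ℝ) (hdm : DualModular f g)
    (hV : Nonempty V) :
    ∃! S₁ : Finset V, S₁.Nonempty ∧
      (∀ S : Finset V, S.Nonempty → density f g S ≤ density f g S₁) ∧
      (∀ S : Finset V, S.Nonempty →
        (∀ T : Finset V, T.Nonempty → density f g T ≤ density f g S) → S ⊆ S₁) := by
  classical
  obtain ⟨v⟩ := hV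
  set N : Finset (Finset V) := Finset.univ.powerset.filter (fun S => S.Nonempty) with hN
  have hmemN : ∀ T : Finset V, T.Nonempty → T ∈ N := fun T hT => by
    simp [hN, hT]
  have hNne : N.Nonempty := ⟨{v}, hmemN _ (Finset.singleton_nonempty v)⟩
  obtain ⟨S₀, hS₀N, hS₀max⟩ := N.exists_max_image (density f g) hNne
  have hS₀ne : S₀.Nonempty := by
    have := hS₀N; simp [hN] at this; exact this
  set ρ := density f g S₀ with hρdef
  have hmax : ∀ T : Finset V, T.Nonempty → density f g T ≤ ρ := fun T hT =>
    hS₀max T (hmemN T hT)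
  have hρ0 : 0 ≤ ρ := div_nonneg (hdm.f_nonneg _) (hdm.g_pos hS₀ne).le
  set D : Finset (Finset V) := N.filter (fun S => density f g S = ρ) with hD
  have hDne : D.Nonempty := ⟨S₀, by simp [hD, hS₀N, hρdef]⟩
  obtain ⟨S₁, hS₁D, hS₁card⟩ := D.exists_max_image Finset.card hDne
  have hS₁mem : S₁ ∈ N ∧ density f g S₁ = ρ := by
    simpa [hD] using hS₁D
  have hS₁ne : S₁.Nonempty := by
    have := hS₁mem.1; simp [hN] at this; exact this
  have key : ∀ S : Finset V, S.Nonempty → density f g S = ρ → S ⊆ S₁ := by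
    intro S hS hρS
    have hUne : (S ∪ S₁).Nonempty := hS.mono (Finset.subset_union_left : S ⊆ S ∪ S₁)
    have hu : density f g (S ∪ S₁) = ρ :=
      densest_union hdm hρ0 hmax hS hS₁ne hρS hS₁mem.2
    have huD : S ∪ S₁ ∈ D := by simp [hD, hmemN _ hUne, hu]
    have hc := hS₁card _ huD
    have heq : S₁ = S ∪ S₁ :=
      Finset.eq_of_subset_of_card_le Finset.subset_union_right hc
    rw [heq]
    exact Finset.subset_union_left
  refine ⟨S₁, ⟨hS₁ne, fun S hS => hS₁mem.2 ▸ hmax S hS, ?_⟩, ?_⟩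
  · intro S hS hSmax
    have hρS : density f g S = ρ :=
      le_antisymm (hmax S hS) (hρdef ▸ hSmax S₀ hS₀ne)
    exact key S hS hρS
  · rintro S' ⟨hS'ne, hS'max, hS'contain⟩
    have hρS' : density f g S' = ρ :=
      le_antisymm (hmax S' hS'ne) (hρdef ▸ hS'max S₀ hS₀ne)
    refine Finset.Subset.antisymm (key S' hS'ne hρS') ?_
    exact hS'contain S₁ hS₁ne (fun T hT => hS₁mem.2 ▸ hmax T hT)
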